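/- Let A ⊂ ℕⁿ be a finite nonempty set all of whose elements have the same coordinate sum, and let c ∈ ℝ^A lie on the topological boundary of the copositive cone C_A. Then there exist a weight w ∈ ℝⁿ and a point u ∈ ℝⁿ_{>0} such that the facial restriction g(x) = Σ_{a∈A_w} c_a x^a satisfies g(u) = 0 and ∂g/∂x_i(u) = 0 for all i = 1, …, n. In particular, every boundary point of C_A gives a facial polynomial with a singular zero in the positive orthant, so the boundary of C_A is contained in the vanishing locus of the principal A-determinant. -/

import Mathlib

open Filter Topology

namespace BPAD
open scoped Classical

variable {n : ℕ}

noncomputable def lin (w : Fin n → ℝ) (a : Fin n → ℕ) : ℝ := ∑ i, w i * (a i : ℝ)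

lemma lin_sub_smul (y w : Fin n → ℝ) (t : ℝ) (a : Fin n → ℕ) :
    lin (fun i => y i - t * w i) a = lin y a - t * lin w a := by
  simp [lin, sub_mul, Finset.sum_sub_distrib, Finset.mul_sum, mul_assoc]

lemma lin_add_single (Y : Fin n → ℝ) (t : ℝ) (i : Fin n) (a : Fin n → ℕ) :
    lin (fun j => Y j + (if j = i then t else 0)) a = lin Y a + t * (a i : ℝ) := by
  simp only [lin, add_mul, Finset.sum_add_distrib]
  congr 1
  rw [Finset.sum_eq_single i (fun b _ hb => by simp [hb]) (by simp)]
  simp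

lemma lin_neg_div (y : Fin n → ℝ) (M : ℝ) (a : Fin n → ℕ) :
    lin (fun i => -(y i) / M) a = -(lin y a) / M := by
  simp [lin, div_mul_eq_mul_div, Finset.sum_div, neg_mul, ← Finset.sum_neg_distrib]

lemma lin_add_smul (w w' : Fin n → ℝ) (t : ℝ) (a : Fin n → ℕ) :
    lin (fun i => w i + t * w' i) a = lin w a + t * lin w' a := by
  simp [lin, add_mul, Finset.sum_add_distrib, Finset.mul_sum, mul_assoc]

variable (A : Finset (Fin n → ℕ))

noncomputable def face (w : Fin n → ℝ) : Finset ↥A :=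
  A.attach.filter (fun a => ∀ b ∈ A, lin w a.1 ≤ lin w b)

noncomputable def G (c : ↥A → ℝ) (F : Finset ↥A) (y : Fin n → ℝ) : ℝ :=
  ∑ a ∈ F, c a * Real.exp (lin y a.1)

noncomputable def linMap (F : Finset ↥A) : (Fin n → ℝ) →ₗ[ℝ] (↥F → ℝ) where
  toFun y a := lin y a.1.1
  map_add' y z := by funext a; simp [lin, add_mul, Finset.sum_add_distrib]
  map_smul' t y := by funext a; simp [lin, Finset.mul_sum, mul_assoc]

lemma realize (F : Finset ↥A) (y : ℕ → Fin n → ℝ) (η : ↥F → ℝ)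
    (h : ∀ a : ↥F, Tendsto (fun k => lin (y k) a.1.1) atTop (𝓝 (η a))) :
    ∃ Y : Fin n → ℝ, ∀ a : ↥F, lin Y a.1.1 = η a := by
  have hcl : IsClosed ((LinearMap.range (linMap A F) : Submodule ℝ (↥F → ℝ)) : Set (↥F → ℝ)) :=
    Submodule.closed_of_finiteDimensional _
  have hmem : η ∈ (LinearMap.range (linMap A F) : Submodule ℝ (↥F → ℝ)) := by
    exact hcl.mem_of_tendsto (tendsto_pi_nhds.mpr h : Tendsto (fun k => linMap A F (y k)) atTop (𝓝 η)) (Eventually.of_forall fun k => ⟨y k, rfl⟩)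
  obtain ⟨Y, hY⟩ := hmem
  exact ⟨Y, fun a => congrFun hY a⟩

lemma subseq_conv {ι : Type*} [Fintype ι] (v : ℕ → ι → ℝ)
    (hv : ∀ k a, v k a ∈ Set.Icc (0:ℝ) 1) :
    ∃ (μ : ι → ℝ) (φ : ℕ → ℕ), StrictMono φ ∧ (∀ a, μ a ∈ Set.Icc (0:ℝ) 1) ∧
      ∀ a, Tendsto (fun k => v (φ k) a) atTop (𝓝 (μ a)) := by
  have hcomp : IsCompact (Set.univ.pi fun _ : ι => Set.Icc (0:ℝ) 1) :=
    isCompact_univ_pi fun _ => isCompact_Icc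
  obtain ⟨μ, hμ, φ, hφ, hconv⟩ := hcomp.tendsto_subseq
    (x := v) (fun k => Set.mem_univ_pi.mpr fun a => hv k a)
  refine ⟨μ, φ, hφ, fun a => hμ a (Set.mem_univ a), fun a => ?_⟩
  exact tendsto_pi_nhds.mp hconv a

lemma max_one {ι : Type*} [Fintype ι] [Nonempty ι] (v : ℕ → ι → ℝ) (μ : ι → ℝ)
    (hμ1 : ∀ a, μ a ≤ 1)
    (hconv : ∀ a, Tendsto (fun k => v k a) atTop (𝓝 (μ a)))
    (hmax : ∀ k, ∃ a, v k a = 1) : ∃ a, μ a = 1 := by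
  by_contra h
  push_neg at h
  have hlt : ∀ a, μ a < 1 := fun a => lt_of_le_of_ne (hμ1 a) (h a)
  have hev : ∀ᶠ k in atTop, ∀ a, v k a < 1 :=
    eventually_all.mpr fun a => (hconv a).eventually_lt_const (hlt a)
  obtain ⟨k, hk⟩ := hev.exists
  obtain ⟨a, ha⟩ := hmax k
  exact absurd ha (ne_of_lt (hk a))


lemma face_const (w : Fin n → ℝ) {a b : ↥A} (ha : a ∈ face A w) (hb : b ∈ face A w) :
    lin w a.1 = lin w b.1 := by
  rw [face, Finset.mem_filter] at ha hb
  exact le_antisymm (ha.2 b.1 b.2) (hb.2 a.1 a.2)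

lemma face_comp (w w' : Fin n → ℝ) (hA : A.Nonempty)
    (h0 : ∀ a ∈ face A w, 0 ≤ lin w' a.1)
    (hne : ((face A w).filter (fun a => lin w' a.1 = 0)).Nonempty) :
    ∃ W : Fin n → ℝ, face A W = (face A w).filter (fun a => lin w' a.1 = 0) := by
  classical
  obtain ⟨a₀, ha₀⟩ := hne
  rw [Finset.mem_filter] at ha₀
  set F := face A w with hF
  set m := lin w a₀.1 with hm
  have hAat : A.attach.Nonempty := Finset.attach_nonempty_iff.mpr hA
  set K : ℝ := 1 + A.attach.sup' hAat (fun b => |lin w' b.1|) with hK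
  have hKb : ∀ b : ↥A, |lin w' b.1| ≤ K - 1 := by
    intro b; rw [hK]; exact le_of_le_of_eq (Finset.le_sup' (fun b : ↥A => |lin w' b.1|) (Finset.mem_attach _ b)) (by ring)
  have hK1 : 1 ≤ K := by
    have := (abs_nonneg (lin w' a₀.1)).trans (hKb a₀); linarith
  have hK0 : 0 < K := by linarith
  -- δ
  set S := A.attach \ F with hS
  have hmle : ∀ b ∈ A, m ≤ lin w b := by
    intro b hb
    have := (Finset.mem_filter.mp ha₀.1).2
    exact this b hb
  have hSpos : ∀ b ∈ S, 0 < lin w b.1 - m := by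
    intro b hb
    rw [hS, Finset.mem_sdiff] at hb
    have hbn : ¬ (∀ b' ∈ A, lin w b.1 ≤ lin w b') := by
      intro hcon
      exact hb.2 (Finset.mem_filter.mpr ⟨Finset.mem_attach _ _, hcon⟩)
    push_neg at hbn
    obtain ⟨b', hb', hlt⟩ := hbn
    have := hmle b' hb'
    linarith
  set δ : ℝ := if hSne : S.Nonempty then S.inf' hSne (fun b => lin w b.1 - m) else 1 with hδ
  have hδ0 : 0 < δ := by
    rw [hδ]
    split
    · next hSne =>
      obtain ⟨b, hb, hbe⟩ := Finset.exists_mem_eq_inf' hSne (fun b => lin w b.1 - m)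
      rw [hbe]; exact hSpos b hb
    · exact one_pos
  have hδS : ∀ b ∈ S, m + δ ≤ lin w b.1 := by
    intro b hb
    have hSne : S.Nonempty := ⟨b, hb⟩
    have : δ ≤ lin w b.1 - m := by
      rw [hδ, dif_pos hSne]
      exact Finset.inf'_le _ hb
    linarith
  set ε : ℝ := δ / K with hε
  have hε0 : 0 < ε := div_pos hδ0 hK0
  have hεK : ε * K = δ := by rw [hε]; field_simp
  refine ⟨fun i => w i + ε * w' i, ?_⟩
  have hlinW : ∀ b : Fin n → ℕ, lin (fun i => w i + ε * w' i) b = lin w b + ε * lin w' b :=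
    fun b => lin_add_smul w w' ε b
  have hFval : ∀ a ∈ F, lin w a.1 = m := fun a ha => face_const A w ha ha₀.1
  -- key lower bound for b ∉ F
  have hlow : ∀ b : ↥A, b ∉ F → m + ε ≤ lin (fun i => w i + ε * w' i) b.1 := by
    intro b hb
    have hbS : b ∈ S := by rw [hS, Finset.mem_sdiff]; exact ⟨Finset.mem_attach _ _, hb⟩
    have h1 := hδS b hbS
    have h2 : -(K - 1) ≤ lin w' b.1 := neg_le_of_abs_le (hKb b)
    have : ε * (-(K-1)) ≤ ε * lin w' b.1 := by
      exact mul_le_mul_of_nonneg_left h2 (le_of_lt hε0)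
    rw [hlinW]
    have : m + δ - ε * (K - 1) ≤ lin w b.1 + ε * lin w' b.1 := by nlinarith
    have heq : m + δ - ε * (K-1) = m + ε := by rw [← hεK]; ring
    linarith
  have hWa₀ : lin (fun i => w i + ε * w' i) a₀.1 = m := by
    rw [hlinW, ha₀.2, hm]; ring
  ext a
  rw [face, Finset.mem_filter, Finset.mem_filter]
  constructor
  · rintro ⟨-, hmin⟩
    have haa : lin (fun i => w i + ε * w' i) a.1 ≤ m := by
      have := hmin a₀.1 a₀.2
      rwa [hWa₀] at this
    have haF : a ∈ F := by
      by_contra hna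
      have := hlow a hna
      linarith
    refine ⟨haF, ?_⟩
    have h1 : 0 ≤ lin w' a.1 := h0 a haF
    have h2 : lin (fun i => w i + ε * w' i) a.1 = m + ε * lin w' a.1 := by
      rw [hlinW, hFval a haF]
    nlinarith
  · rintro ⟨haF, haz⟩
    refine ⟨Finset.mem_attach _ _, ?_⟩
    intro b hb
    have hWa : lin (fun i => w i + ε * w' i) a.1 = m := by
      rw [hlinW, hFval a haF, haz]; ring
    rw [hWa]
    by_cases hbF : (⟨b, hb⟩ : ↥A) ∈ F
    · rw [hlinW, hFval ⟨b, hb⟩ hbF]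
      have := h0 _ hbF
      nlinarith
    · have := hlow ⟨b, hb⟩ hbF
      linarith


lemma subface_nonneg (c : ↥A → ℝ) (F : Finset ↥A) (w' : Fin n → ℝ)
    (h1 : ∀ y, 0 ≤ G A c F y) (h0 : ∀ a ∈ F, 0 ≤ lin w' a.1) :
    ∀ y, 0 ≤ G A c (F.filter (fun a => lin w' a.1 = 0)) y := by
  classical
  intro y
  have key : Tendsto (fun t : ℕ => G A c F (fun i => y i - (t : ℝ) * w' i)) atTop
      (𝓝 (G A c (F.filter (fun a => lin w' a.1 = 0)) y)) := by
    have hGt : ∀ t : ℕ, G A c F (fun i => y i - (t:ℝ) * w' i)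
        = ∑ a ∈ F, c a * Real.exp (lin y a.1 - (t:ℝ) * lin w' a.1) := by
      intro t; unfold G; congr 1; funext a; rw [lin_sub_smul]
    have hlim : G A c (F.filter (fun a => lin w' a.1 = 0)) y
        = ∑ a ∈ F, (if lin w' a.1 = 0 then c a * Real.exp (lin y a.1) else 0) := by
      rw [G, Finset.sum_filter]
    rw [hlim]
    simp only [hGt]
    refine tendsto_finset_sum _ (fun a ha => ?_)
    by_cases hz : lin w' a.1 = 0
    · simp only [hz, if_pos, mul_zero, sub_zero]
      exact tendsto_const_nhds
    · rw [if_neg hz]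
      have hpos : 0 < lin w' a.1 := lt_of_le_of_ne (h0 a ha) (Ne.symm hz)
      have hbot : Tendsto (fun t : ℕ => lin y a.1 - (t:ℝ) * lin w' a.1) atTop atBot := by
        apply tendsto_atBot_add_const_left
        have : Tendsto (fun t : ℕ => (t:ℝ) * lin w' a.1) atTop atTop :=
          Tendsto.atTop_mul_const hpos tendsto_natCast_atTop_atTop
        simpa using tendsto_neg_atBot_iff.mpr this
      have := (Real.tendsto_exp_atBot.comp hbot).const_mul (c a)
      simpa using this
  exact ge_of_tendsto' key (fun t => h1 _)


lemma grad_zero (c : ↥A → ℝ) (F : Finset ↥A) (h1 : ∀ y, 0 ≤ G A c F y)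
    (Y : Fin n → ℝ) (hY : G A c F Y = 0) :
    ∀ i : Fin n, ∑ a ∈ F, c a * (a.1 i : ℝ) * Real.exp (lin Y a.1) = 0 := by
  intro i
  set φ : ℝ → ℝ := fun t => ∑ a ∈ F, c a * Real.exp (lin Y a.1 + t * (a.1 i : ℝ)) with hφ
  have hφG : ∀ t, φ t = G A c F (fun j => Y j + (if j = i then t else 0)) := by
    intro t; rw [hφ]; unfold G; simp only; congr 1; funext a; rw [lin_add_single]
  have hmin : IsLocalMin φ 0 := by
    apply IsMinOn.isLocalMin (s := Set.univ) _ (by simp)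
    intro t _
    show φ 0 ≤ φ t
    rw [hφG t, hφG 0]
    have h00 : G A c F (fun j => Y j + (if j = i then (0:ℝ) else 0)) = 0 := by
      simpa using hY
    rw [h00]
    exact h1 _
  have hder : HasDerivAt φ (∑ a ∈ F, c a * ((a.1 i : ℝ) * Real.exp (lin Y a.1))) 0 := by
    apply HasDerivAt.fun_sum
    intro a _
    have h1' : HasDerivAt (fun t : ℝ => lin Y a.1 + t * (a.1 i : ℝ)) ((a.1 i : ℝ)) 0 :=
      (hasDerivAt_mul_const _).const_add _
    have h2' := h1'.exp
    have h3' := h2'.const_mul (c a)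
    convert h3' using 1
    · rfl
    simp [mul_comm]
  have := hmin.hasDerivAt_eq_zero hder
  rw [← this]
  congr 1; funext a; ring


lemma G_attach (c : ↥A → ℝ) (F : Finset ↥A) (y : Fin n → ℝ) :
    G A c F y = ∑ a ∈ F.attach, c a.1 * Real.exp (lin y a.1.1) :=
  (Finset.sum_attach _ _).symm

lemma core (c : ↥A → ℝ) (hA : A.Nonempty) :
    ∀ N : ℕ, ∀ w : Fin n → ℝ, (face A w).card ≤ N →
    (∀ y, 0 ≤ G A c (face A w) y) →
    (∃ (as : ↥A) (y : ℕ → Fin n → ℝ), as ∈ face A w ∧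
      (∀ k, ∀ a ∈ face A w, lin (y k) a.1 ≤ 0) ∧
      Tendsto (fun k => lin (y k) as.1) atTop (𝓝 0) ∧
      Tendsto (fun k => G A c (face A w) (y k)) atTop (𝓝 0)) →
    ∃ (W : Fin n → ℝ) (Y : Fin n → ℝ),
      (∀ y, 0 ≤ G A c (face A W) y) ∧ G A c (face A W) Y = 0 := by
  intro N
  induction N with
  | zero =>
    rintro w hcard h1 ⟨as, y, has, -⟩
    have := Finset.card_pos.mpr ⟨as, has⟩
    omega
  | succ N ih =>
    rintro w hcard h1 ⟨as, y, has, hle, has0, hG⟩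
    set F := face A w with hF
    have hFne : F.Nonempty := ⟨as, has⟩
    -- first extraction
    have hIcc : ∀ k (a : ↥F), Real.exp (lin (y k) a.1.1) ∈ Set.Icc (0:ℝ) 1 := fun k a =>
      ⟨(Real.exp_pos _).le, Real.exp_le_one_iff.mpr (hle k a.1 a.2)⟩
    obtain ⟨μ, φ, hφ, hμIcc, hμconv⟩ :=
      subseq_conv (fun k (a : ↥F) => Real.exp (lin (y k) a.1.1)) hIcc
    set y1 : ℕ → Fin n → ℝ := fun k => y (φ k) with hy1
    have hle1 : ∀ k, ∀ a ∈ F, lin (y1 k) a.1 ≤ 0 := fun k => hle (φ k)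
    have has1 : Tendsto (fun k => lin (y1 k) as.1) atTop (𝓝 0) :=
      has0.comp hφ.tendsto_atTop
    have hG1 : Tendsto (fun k => G A c F (y1 k)) atTop (𝓝 0) :=
      hG.comp hφ.tendsto_atTop
    set asF : ↥F := ⟨as, has⟩ with hasF
    have hNeF : Nonempty ↥F := ⟨asF⟩
    have hμas : μ asF = 1 := by
      have h2 : Tendsto (fun k => Real.exp (lin (y1 k) as.1)) atTop (𝓝 1) := by
        have := Real.continuous_exp.continuousAt.tendsto.comp has1
        simpa [Function.comp_def] using this
      exact tendsto_nhds_unique (hμconv asF) h2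
    by_cases hall : ∀ a : ↥F, μ a ≠ 0
    · -- terminal case: realize the limit inside the torus
      have hμpos : ∀ a : ↥F, 0 < μ a := fun a =>
        lt_of_le_of_ne (hμIcc a).1 (Ne.symm (hall a))
      have hlconv : ∀ a : ↥F, Tendsto (fun k => lin (y1 k) a.1.1) atTop (𝓝 (Real.log (μ a))) := by
        intro a
        have := ((hμconv a).log (hall a))
        refine this.congr (fun k => ?_)
        rw [Real.log_exp]
      obtain ⟨Y, hY⟩ := realize A F y1 (fun a => Real.log (μ a)) hlconv
      refine ⟨w, Y, h1, ?_⟩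
      have hGY : G A c F Y = ∑ a ∈ F.attach, c a.1 * μ a := by
        rw [G_attach]
        refine Finset.sum_congr rfl (fun a _ => ?_)
        rw [hY a, Real.exp_log (hμpos a)]
      have hlim : Tendsto (fun k => G A c F (y1 k)) atTop (𝓝 (∑ a ∈ F.attach, c a.1 * μ a)) := by
        have : ∀ k, G A c F (y1 k) = ∑ a ∈ F.attach, c a.1 * Real.exp (lin (y1 k) a.1.1) :=
          fun k => G_attach A c F (y1 k)
        simp only [this]
        exact tendsto_finset_sum _ (fun a _ => (hμconv a).const_mul _)
      rw [hGY, tendsto_nhds_unique hlim hG1]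
    · push_neg at hall
      obtain ⟨a₀, hμ0⟩ := hall
      -- lin (y1 k) a₀ → -∞
      have hbot : Tendsto (fun k => lin (y1 k) a₀.1.1) atTop atBot := by
        rw [tendsto_atBot]
        intro b
        have h0b : (0:ℝ) < Real.exp b := Real.exp_pos b
        have := (hμ0 ▸ hμconv a₀ : Tendsto (fun k => Real.exp (lin (y1 k) a₀.1.1)) atTop (𝓝 0))
        filter_upwards [this.eventually_lt_const h0b] with k hk
        exact (Real.exp_lt_exp.mp hk).le
      set M : ℕ → ℝ := fun k => F.sup' hFne (fun a => -(lin (y1 k) a.1)) with hM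
      have hMtop : Tendsto M atTop atTop := by
        apply tendsto_atTop_mono (f := fun k => -(lin (y1 k) a₀.1.1))
        · intro k
          exact Finset.le_sup' (fun a : ↥A => -(lin (y1 k) a.1)) a₀.2
        · exact tendsto_neg_atTop_iff.mpr hbot
      obtain ⟨K, hK⟩ := eventually_atTop.mp (hMtop.eventually_ge_atTop 1)
      set z : ℕ → Fin n → ℝ := fun k => y1 (k + K) with hz
      have hM2 : ∀ k, 1 ≤ M (k + K) := fun k => hK (k + K) (Nat.le_add_left K k)
      have hM2pos : ∀ k, 0 < M (k + K) := fun k => lt_of_lt_of_le one_pos (hM2 k)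
      -- second extraction
      have hIcc2 : ∀ k (a : ↥F), -(lin (z k) a.1.1) / M (k + K) ∈ Set.Icc (0:ℝ) 1 := by
        intro k a
        constructor
        · apply div_nonneg _ (hM2pos k).le
          simpa using hle1 (k + K) a.1 a.2
        · rw [div_le_one (hM2pos k)]
          exact Finset.le_sup' (fun a : ↥A => -(lin (y1 (k + K)) a.1)) a.2
      obtain ⟨κ, σ, hσ, hκIcc, hκconv⟩ :=
        subseq_conv (fun k (a : ↥F) => -(lin (z k) a.1.1) / M (k + K)) hIcc2
      set z2 : ℕ → Fin n → ℝ := fun k => z (σ k) with hz2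
      set idx : ℕ → ℕ := fun k => φ (σ k + K) with hidx
      have hidxtop : Tendsto (fun k => σ k + K) atTop atTop :=
        (tendsto_add_atTop_nat K).comp hσ.tendsto_atTop
      have hz2eq : ∀ k, z2 k = y1 (σ k + K) := fun k => rfl
      have hM3top : Tendsto (fun k => M (σ k + K)) atTop atTop := hMtop.comp hidxtop
      -- κ attains 1
      have hmax1 : ∀ k, ∃ a : ↥F, -(lin (z (σ k)) a.1.1) / M (σ k + K) = 1 := by
        intro k
        obtain ⟨a, haF, hae⟩ := Finset.exists_mem_eq_sup' hFne (fun a : ↥A => -(lin (y1 (σ k + K)) a.1))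
        refine ⟨⟨a, haF⟩, ?_⟩
        have hne : M (σ k + K) ≠ 0 := (hM2pos (σ k)).ne'
        rw [show lin (z (σ k)) a.1 = lin (y1 (σ k + K)) a.1 from rfl, ← hae]
        exact div_self hne
      obtain ⟨ah, hah⟩ := max_one (fun k (a : ↥F) => -(lin (z (σ k)) a.1.1) / M (σ k + K)) κ
        (fun a => (hκIcc a).2) hκconv hmax1
      -- κ asF = 0
      have has2 : Tendsto (fun k => lin (z2 k) as.1) atTop (𝓝 0) := has1.comp hidxtop
      have hκas : κ asF = 0 := by
        have h2 : Tendsto (fun k => -(lin (z (σ k)) asF.1.1) / M (σ k + K)) atTop (𝓝 0) := by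
          apply Tendsto.div_atTop (a := -0) _ hM3top
          exact (has2.neg)
        exact tendsto_nhds_unique (hκconv asF) (by simpa using h2)
      -- realize w'
      obtain ⟨w', hw'⟩ := realize A F (fun k => fun i => -(z2 k i) / M (σ k + K)) κ (by
        intro a
        have : ∀ k, lin (fun i => -(z2 k i) / M (σ k + K)) a.1.1
            = -(lin (z (σ k)) a.1.1) / M (σ k + K) := fun k => lin_neg_div _ _ _
        simp only [this]
        exact hκconv a)
      have h0' : ∀ a ∈ F, 0 ≤ lin w' a.1 := by
        intro a ha
        rw [hw' ⟨a, ha⟩]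
        exact (hκIcc ⟨a, ha⟩).1
      set F'' : Finset ↥A := F.filter (fun a => lin w' a.1 = 0) with hF''
      have hasF'' : as ∈ F'' := by
        rw [hF'', Finset.mem_filter]
        exact ⟨has, by rw [hw' asF]; exact hκas⟩
      have hahn : ah.1 ∉ F'' := by
        rw [hF'', Finset.mem_filter]
        rintro ⟨-, hcon⟩
        rw [hw' ah] at hcon
        rw [hcon] at hah
        norm_num at hah
      have hss : F'' ⊂ F := by
        refine Finset.ssubset_iff_subset_ne.mpr ⟨Finset.filter_subset _ _, ?_⟩
        intro hcon
        rw [hcon] at hahn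
        exact hahn ah.2
      obtain ⟨W, hW0⟩ := face_comp A w w' hA h0' ⟨as, hasF''⟩
      have hW : face A W = F'' := by rw [hW0, hF'']
      -- exp(lin z2 a) → 0 for a off F''
      have hoff : ∀ a ∈ F, a ∉ F'' → Tendsto (fun k => Real.exp (lin (z2 k) a.1)) atTop (𝓝 0) := by
        intro a haF haN
        have hκne : κ ⟨a, haF⟩ ≠ 0 := by
          intro hcon
          apply haN
          rw [hF'', Finset.mem_filter]
          refine ⟨haF, ?_⟩
          rw [hw' ⟨a, haF⟩]
          exact hcon
        have hκpos : 0 < κ ⟨a, haF⟩ := lt_of_le_of_ne (hκIcc ⟨a, haF⟩).1 (Ne.symm hκne)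
        have hprod : Tendsto (fun k => (-(lin (z (σ k)) a.1) / M (σ k + K)) * M (σ k + K)) atTop atTop :=
          Tendsto.pos_mul_atTop hκpos (hκconv ⟨a, haF⟩) hM3top
        have hlin2 : Tendsto (fun k => lin (z2 k) a.1) atTop atBot := by
          have heq : ∀ k, lin (z2 k) a.1 = -((-(lin (z (σ k)) a.1) / M (σ k + K)) * M (σ k + K)) := by
            intro k
            rw [div_mul_cancel₀ _ (hM2pos (σ k)).ne', neg_neg]
          exact (tendsto_neg_atBot_iff.mpr hprod).congr (fun k => (heq k).symm)
        exact Real.tendsto_exp_atBot.comp hlin2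
      -- new invariant data
      have hG2 : Tendsto (fun k => G A c F (z2 k)) atTop (𝓝 0) := hG1.comp hidxtop
      have hsplit : ∀ yy, G A c F'' yy
          = G A c F yy - ∑ a ∈ F.filter (fun a => ¬ lin w' a.1 = 0), c a * Real.exp (lin yy a.1) := by
        intro yy
        rw [hF'']
        unfold G
        rw [← Finset.sum_filter_add_sum_filter_not F (fun a => lin w' a.1 = 0)
          (fun a => c a * Real.exp (lin yy a.1))]
        ring
      have hGnew : Tendsto (fun k => G A c F'' (z2 k)) atTop (𝓝 0) := by
        simp only [hsplit]
        have hzero : Tendsto (fun k => ∑ a ∈ F.filter (fun a => ¬ lin w' a.1 = 0),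
            c a * Real.exp (lin (z2 k) a.1)) atTop (𝓝 0) := by
          have : Tendsto (fun k => ∑ a ∈ F.filter (fun a => ¬ lin w' a.1 = 0),
              c a * Real.exp (lin (z2 k) a.1)) atTop
              (𝓝 (∑ a ∈ F.filter (fun a => ¬ lin w' a.1 = 0), (0:ℝ))) := by
            refine tendsto_finset_sum _ (fun a ha => ?_)
            rw [Finset.mem_filter] at ha
            have haN : a ∉ F'' := by
              rw [hF'', Finset.mem_filter]
              rintro ⟨-, hcon⟩
              exact ha.2 hcon
            simpa using (hoff a ha.1 haN).const_mul (c a)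
          simpa using this
        simpa using hG2.sub hzero
      -- apply induction hypothesis
      apply ih W
      · rw [hW]
        have := Finset.card_lt_card hss
        omega
      · intro yy
        rw [hW]
        exact subface_nonneg A c F w' h1 h0' yy
      · refine ⟨as, z2, ?_, ?_, has2, ?_⟩
        · rw [hW]; exact hasF''
        · intro k a ha
          rw [hW] at ha
          exact hle1 (σ k + K) a (Finset.filter_subset _ _ ha)
        · rw [hW]
          exact hGnew


lemma upgrade (c : ↥A → ℝ) (F : Finset ↥A)
    (y : ℕ → Fin n → ℝ)
    (hle : ∀ k, ∀ a ∈ F, lin (y k) a.1 ≤ 0)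
    (hmax : ∀ k, ∃ a ∈ F, lin (y k) a.1 = 0)
    (hG : Tendsto (fun k => G A c F (y k)) atTop (𝓝 0)) :
    ∃ (as : ↥A) (y' : ℕ → Fin n → ℝ), as ∈ F ∧ (∀ k, ∀ a ∈ F, lin (y' k) a.1 ≤ 0) ∧
      Tendsto (fun k => lin (y' k) as.1) atTop (𝓝 0) ∧
      Tendsto (fun k => G A c F (y' k)) atTop (𝓝 0) := by
  have hFne : F.Nonempty := by
    obtain ⟨a, ha, -⟩ := hmax 0
    exact ⟨a, ha⟩
  have hNe : Nonempty ↥F := ⟨⟨hFne.choose, hFne.choose_spec⟩⟩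
  have hIcc : ∀ k (a : ↥F), Real.exp (lin (y k) a.1.1) ∈ Set.Icc (0:ℝ) 1 := fun k a =>
    ⟨(Real.exp_pos _).le, Real.exp_le_one_iff.mpr (hle k a.1 a.2)⟩
  obtain ⟨μ, φ, hφ, hμIcc, hμconv⟩ :=
    subseq_conv (fun k (a : ↥F) => Real.exp (lin (y k) a.1.1)) hIcc
  obtain ⟨as, hμas⟩ := max_one (fun k (a : ↥F) => Real.exp (lin (y (φ k)) a.1.1)) μ
    (fun a => (hμIcc a).2) hμconv (by
      intro k
      obtain ⟨a, ha, h0⟩ := hmax (φ k)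
      refine ⟨⟨a, ha⟩, ?_⟩
      show Real.exp (lin (y (φ k)) a.1) = 1
      rw [h0, Real.exp_zero])
  refine ⟨as.1, fun k => y (φ k), as.2, fun k => hle (φ k), ?_, hG.comp hφ.tendsto_atTop⟩
  have := ((hμconv as).log (by rw [hμas]; norm_num))
  rw [hμas, Real.log_one] at this
  refine this.congr (fun k => ?_)
  rw [Real.log_exp]

lemma face_zero : face A (0 : Fin n → ℝ) = A.attach := by
  rw [face]
  refine Finset.filter_true_of_mem (fun a _ => ?_)
  intro b _
  simp [lin]

lemma prod_exp_pow (Y : Fin n → ℝ) (a : Fin n → ℕ) :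
    ∏ i, Real.exp (Y i) ^ a i = Real.exp (lin Y a) := by
  rw [lin, Real.exp_sum]
  refine Finset.prod_congr rfl (fun i _ => ?_)
  rw [mul_comm, Real.exp_nat_mul]

lemma prod_pow_eq_exp (u : Fin n → ℝ) (hu : ∀ i, 0 < u i) (a : Fin n → ℕ) :
    ∏ i, u i ^ a i = Real.exp (lin (fun i => Real.log (u i)) a) := by
  rw [← prod_exp_pow]
  refine Finset.prod_congr rfl (fun i _ => ?_)
  rw [Real.exp_log (hu i)]

open MvPolynomial in
lemma poly_monomial (ca : ℝ) (a : Fin n → ℕ) :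
    MvPolynomial.C ca * ∏ j, (MvPolynomial.X j : MvPolynomial (Fin n) ℝ) ^ a j
      = MvPolynomial.monomial (Finsupp.equivFunOnFinite.symm a) ca := by
  rw [MvPolynomial.monomial_eq]
  congr 1
  rw [Finsupp.prod_fintype _ _ (fun i => pow_zero _)]
  refine Finset.prod_congr rfl (fun j _ => ?_)
  simp

lemma pow_shift (u : Fin n → ℝ) (a : Fin n → ℕ) (i : Fin n) :
    ((a i : ℝ)) * ((∏ j, u j ^ (((Finsupp.equivFunOnFinite.symm a - Finsupp.single i 1 : Fin n →₀ ℕ) j))) * u i)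
      = (a i : ℝ) * ∏ j, u j ^ a j := by
  rcases Nat.eq_zero_or_pos (a i) with h0 | hpos
  · simp [h0]
  · congr 1
    have hval : ∀ j, (((Finsupp.equivFunOnFinite.symm a - Finsupp.single i 1 : Fin n →₀ ℕ) j))
        = a j - (if i = j then 1 else 0) := by
      intro j
      simp [Finsupp.sub_apply, Finsupp.single_apply]
    have hmem : i ∈ (Finset.univ : Finset (Fin n)) := Finset.mem_univ i
    rw [Finset.prod_eq_prod_diff_singleton_mul hmem, Finset.prod_eq_prod_diff_singleton_mul hmem
      (fun j => u j ^ a j)]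
    have hrest : ∏ j ∈ Finset.univ \ {i}, u j ^ (((Finsupp.equivFunOnFinite.symm a - Finsupp.single i 1 : Fin n →₀ ℕ) j))
        = ∏ j ∈ Finset.univ \ {i}, u j ^ a j := by
      refine Finset.prod_congr rfl (fun j hj => ?_)
      rw [Finset.mem_sdiff, Finset.mem_singleton] at hj
      rw [hval j, if_neg (fun h => hj.2 h.symm)]
      simp
    rw [hrest, hval i, if_pos rfl, mul_assoc, ← pow_succ]
    congr 2
    omega

end BPAD



open MvPolynomial in
open scoped Classical in
/-- Every boundary point `c` of the copositive cone `C_A` yields a facial restriction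
`g = Σ_{a∈A_w} c_a x^a` with a singular zero in the positive orthant: `g(u) = 0` and
all partial derivatives of `g` vanish at `u`. Hence the boundary of `C_A` lies in the
vanishing locus of the principal `A`-determinant. -/
theorem boundary_in_principal_A_determinant (n : ℕ) (A : Finset (Fin n → ℕ))
    (hA : A.Nonempty) (hdeg : ∃ d : ℕ, ∀ a ∈ A, ∑ i, a i = d)
    (C : Set (↥A → ℝ))
    (hC : C = {c : ↥A → ℝ | ∀ u : Fin n → ℝ, (∀ i, 0 ≤ u i) →
      0 ≤ ∑ a ∈ A.attach, c a * ∏ i, u i ^ a.1 i})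
    (c : ↥A → ℝ) (hc : c ∈ frontier C) :
    ∃ (w : Fin n → ℝ) (u : Fin n → ℝ), (∀ i, 0 < u i) ∧
      (let g : MvPolynomial (Fin n) ℝ :=
        ∑ a ∈ A.attach.filter (fun a => ∀ b ∈ A,
            ∑ i, w i * (a.1 i : ℝ) ≤ ∑ i, w i * (b i : ℝ)),
          MvPolynomial.C (c a) * ∏ i, X i ^ a.1 i
      eval u g = 0 ∧ ∀ i, eval u (pderiv i g) = 0) := by
  classical
  open Filter Topology BPAD in
  · classical
    obtain ⟨d, hd⟩ := hdeg
    have hAat : A.attach.Nonempty := Finset.attach_nonempty_iff.mpr hA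
    -- C is closed
    have hCclosed : IsClosed C := by
      rw [hC]
      have heq : {c : ↥A → ℝ | ∀ u : Fin n → ℝ, (∀ i, 0 ≤ u i) →
          0 ≤ ∑ a ∈ A.attach, c a * ∏ i, u i ^ a.1 i}
          = ⋂ (u : Fin n → ℝ), {c : ↥A → ℝ | (∀ i, 0 ≤ u i) →
          0 ≤ ∑ a ∈ A.attach, c a * ∏ i, u i ^ a.1 i} := by
        ext c'; simp [Set.mem_iInter]
      rw [heq]
      refine isClosed_iInter (fun u => ?_)
      by_cases hP : ∀ i, 0 ≤ u i
      · have : {c : ↥A → ℝ | (∀ i, 0 ≤ u i) →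
            0 ≤ ∑ a ∈ A.attach, c a * ∏ i, u i ^ a.1 i}
            = {c : ↥A → ℝ | 0 ≤ ∑ a ∈ A.attach, c a * ∏ i, u i ^ a.1 i} := by
          ext c'; simp [hP]
        rw [this]
        exact isClosed_le continuous_const
          (continuous_finset_sum _ fun a _ => (continuous_apply a).mul continuous_const)
      · have : {c : ↥A → ℝ | (∀ i, 0 ≤ u i) →
            0 ≤ ∑ a ∈ A.attach, c a * ∏ i, u i ^ a.1 i} = Set.univ := by
          ext c'; simp [hP]
        rw [this]; exact isClosed_univ
    have hcC : c ∈ C := by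
      have := hc.1
      rwa [hCclosed.closure_eq] at this
    -- C is convex
    have hconvex : Convex ℝ C := by
      rw [hC]
      intro p hp q hq α β hα hβ hαβ
      intro u hu
      have h1 := hp u hu
      have h2 := hq u hu
      simp only [Pi.add_apply, Pi.smul_apply, smul_eq_mul]
      have hsum : ∑ a ∈ A.attach, (α * p a + β * q a) * ∏ i, u i ^ a.1 i
          = α * (∑ a ∈ A.attach, p a * ∏ i, u i ^ a.1 i)
            + β * (∑ a ∈ A.attach, q a * ∏ i, u i ^ a.1 i) := by
        rw [Finset.mul_sum, Finset.mul_sum, ← Finset.sum_add_distrib]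
        exact Finset.sum_congr rfl fun a _ => by ring
      rw [hsum]
      exact add_nonneg (mul_nonneg hα h1) (mul_nonneg hβ h2)
    -- the all-ones vector is interior
    have hone : (fun _ => (1:ℝ)) ∈ interior C := by
      refine mem_interior.mpr ⟨Metric.ball (fun _ => 1) (1/2), ?_, Metric.isOpen_ball,
        Metric.mem_ball_self (by norm_num)⟩
      intro c' hc'
      rw [hC]
      intro u hu
      refine Finset.sum_nonneg (fun a _ => mul_nonneg ?_
        (Finset.prod_nonneg fun i _ => pow_nonneg (hu i) _))
      have hd' := (dist_pi_lt_iff (by norm_num : (0:ℝ) < 1/2)).mp hc' a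
      rw [Real.dist_eq] at hd'
      have := abs_lt.mp hd'
      linarith [this.1]
    -- points beyond c are outside C
    have hout : ∀ t : ℝ, 0 < t → (fun a : ↥A => (1+t) * c a - t) ∉ C := by
      intro t ht hmem
      have hb1 : (0:ℝ) < t/(1+t) := by positivity
      have hb2 : (0:ℝ) ≤ 1/(1+t) := by positivity
      have hb3 : t/(1+t) + 1/(1+t) = 1 := by field_simp; ring
      have hcomb := hconvex.combo_interior_closure_mem_interior hone
        (subset_closure hmem) hb1 hb2 hb3
      have heqc : (t/(1+t)) • (fun _ => (1:ℝ)) + (1/(1+t)) • (fun a : ↥A => (1+t) * c a - t) = c := by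
        funext a
        simp only [Pi.add_apply, Pi.smul_apply, smul_eq_mul]
        field_simp
        ring
      rw [heqc] at hcomb
      exact hc.2 hcomb
    -- h1 : nonnegativity of G on the full support
    have h1 : ∀ y : Fin n → ℝ, 0 ≤ BPAD.G A c A.attach y := by
      intro y
      have hmem := hcC
      rw [hC] at hmem
      have := hmem (fun i => Real.exp (y i)) (fun i => (Real.exp_pos _).le)
      unfold BPAD.G
      have hpr : ∀ a : ↥A, ∏ i, Real.exp (y i) ^ a.1 i = Real.exp (BPAD.lin y a.1) :=
        fun a => prod_exp_pow y a.1
      calc (0:ℝ) ≤ ∑ a ∈ A.attach, c a * ∏ i, Real.exp (y i) ^ a.1 i := this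
      _ = ∑ a ∈ A.attach, c a * Real.exp (BPAD.lin y a.1) :=
          Finset.sum_congr rfl fun a _ => by rw [hpr a]
    -- existence of almost-minimizing normalized sequence
    have hseq : ∀ k : ℕ, ∃ y : Fin n → ℝ, (∀ a ∈ A.attach, BPAD.lin y a.1 ≤ 0) ∧
        (∃ a ∈ A.attach, BPAD.lin y a.1 = 0) ∧
        BPAD.G A c A.attach y ≤ (1/((k:ℝ)+1)) * A.card := by
      intro k
      set t : ℝ := 1/((k:ℝ)+1) with hts
      have ht : 0 < t := by positivity
      have hnot := hout t ht
      rw [hC] at hnot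
      simp only [Set.mem_setOf_eq] at hnot
      push_neg at hnot
      obtain ⟨u0, hu0, hlt0⟩ := hnot
      -- perturb to a strictly positive point
      set EV : (Fin n → ℝ) → ℝ :=
        fun v => ∑ a ∈ A.attach, ((1+t) * c a - t) * ∏ i, v i ^ a.1 i with hEV
      have hEVcont : Continuous EV :=
        continuous_finset_sum _ fun a _ => continuous_const.mul
          (continuous_finset_prod _ fun i _ => (continuous_apply i).pow _)
      have htendu : Tendsto (fun m : ℕ => (fun i => u0 i + 1/((m:ℝ)+1))) atTop (𝓝 u0) := by
        rw [tendsto_pi_nhds]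
        intro i
        have := tendsto_one_div_add_atTop_nhds_zero_nat (𝕜 := ℝ)
        simpa using (tendsto_const_nhds (x := u0 i)).add this
      have htend : Tendsto (fun m : ℕ => EV (fun i => u0 i + 1/((m:ℝ)+1))) atTop (𝓝 (EV u0)) :=
        (hEVcont.tendsto u0).comp htendu
      have hlt0' : EV u0 < 0 := hlt0
      obtain ⟨m, hm⟩ := (htend.eventually_lt_const hlt0').exists
      set u : Fin n → ℝ := fun i => u0 i + 1/((m:ℝ)+1) with huset
      have hupos : ∀ i, 0 < u i := fun i => by
        have : (0:ℝ) < 1/((m:ℝ)+1) := by positivity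
        have := hu0 i
        rw [huset]
        dsimp only
        linarith
      set yraw : Fin n → ℝ := fun i => Real.log (u i) with hyraw
      have hprod : ∀ a : ↥A, ∏ i, u i ^ a.1 i = Real.exp (BPAD.lin yraw a.1) :=
        fun a => prod_pow_eq_exp u hupos a.1
      set s : ℝ := A.attach.sup' hAat (fun a => BPAD.lin yraw a.1) with hs
      set y' : Fin n → ℝ := fun i => yraw i - (s/(d:ℝ)) * 1 with hy'
      have hlind : ∀ a : ↥A, BPAD.lin (fun _ => (1:ℝ)) a.1 = (d:ℝ) := by
        intro a
        rw [BPAD.lin]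
        simp only [one_mul]
        rw [← Nat.cast_sum]
        exact_mod_cast congrArg (Nat.cast (R := ℝ)) (hd a.1 a.2)
      have hshift : ∀ a : ↥A, BPAD.lin y' a.1 = BPAD.lin yraw a.1 - s := by
        intro a
        rw [hy']
        rw [lin_sub_smul yraw (fun _ => (1:ℝ)) (s/(d:ℝ)) a.1, hlind a]
        by_cases hd0 : d = 0
        · -- all exponents are zero, so lin yraw a = 0 and s = 0
          have hzero : ∀ b : ↥A, BPAD.lin yraw b.1 = 0 := by
            intro b
            have hb := hd b.1 b.2
            rw [hd0] at hb
            have : ∀ i, b.1 i = 0 := by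
              intro i
              exact (Finset.sum_eq_zero_iff.mp hb) i (Finset.mem_univ i)
            rw [BPAD.lin]
            refine Finset.sum_eq_zero (fun i _ => ?_)
            rw [this i]
            simp
          have hs0 : s = 0 := by
            rw [hs]
            refine le_antisymm ?_ ?_
            · refine Finset.sup'_le _ _ (fun b hb => ?_)
              rw [hzero b]
            · obtain ⟨b, hb, hbe⟩ := Finset.exists_mem_eq_sup' hAat (fun a => BPAD.lin yraw a.1)
              rw [hbe, hzero b]
          rw [hd0, hs0]
          simp
        · have : (s/(d:ℝ)) * (d:ℝ) = s := by
            field_simp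
          rw [this]
      have hsle : ∀ a ∈ A.attach, BPAD.lin y' a.1 ≤ 0 := by
        intro a ha
        rw [hshift a]
        have := Finset.le_sup' (fun a : ↥A => BPAD.lin yraw a.1) ha
        rw [← hs] at this
        linarith
      have hsmax : ∃ a ∈ A.attach, BPAD.lin y' a.1 = 0 := by
        obtain ⟨b, hb, hbe⟩ := Finset.exists_mem_eq_sup' hAat (fun a => BPAD.lin yraw a.1)
        refine ⟨b, hb, ?_⟩
        rw [hshift b, hs, ← hbe]
        ring
      refine ⟨y', hsle, hsmax, ?_⟩
      -- the main estimate
      set S : ℝ := ∑ a ∈ A.attach, c a * Real.exp (BPAD.lin yraw a.1) with hS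
      set T : ℝ := ∑ a ∈ A.attach, Real.exp (BPAD.lin yraw a.1) with hT
      have hm' : (1+t) * S - t * T < 0 := by
        have hEVu : EV u = ∑ a ∈ A.attach, ((1+t) * c a - t) * Real.exp (BPAD.lin yraw a.1) := by
          rw [hEV]
          exact Finset.sum_congr rfl fun a _ => by rw [hprod a]
        have : EV u < 0 := hm
        rw [hEVu] at this
        calc (1+t) * S - t * T
            = ∑ a ∈ A.attach, ((1+t) * c a - t) * Real.exp (BPAD.lin yraw a.1) := by
              rw [hS, hT, Finset.mul_sum, Finset.mul_sum, ← Finset.sum_sub_distrib]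
              exact Finset.sum_congr rfl fun a _ => by ring
        _ < 0 := this
      have hGy' : BPAD.G A c A.attach y' = Real.exp (-s) * S := by
        unfold BPAD.G
        rw [hS, Finset.mul_sum]
        refine Finset.sum_congr rfl (fun a _ => ?_)
        rw [hshift a, sub_eq_add_neg, Real.exp_add]
        ring
      have hTb : Real.exp (-s) * T ≤ (A.card : ℝ) := by
        rw [hT, Finset.mul_sum]
        calc ∑ a ∈ A.attach, Real.exp (-s) * Real.exp (BPAD.lin yraw a.1)
            = ∑ a ∈ A.attach, Real.exp (BPAD.lin y' a.1) := by
              refine Finset.sum_congr rfl (fun a _ => ?_)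
              rw [hshift a, sub_eq_add_neg, Real.exp_add]
              ring
        _ ≤ ∑ _a ∈ A.attach, (1:ℝ) :=
              Finset.sum_le_sum (fun a ha => Real.exp_le_one_iff.mpr (hsle a ha))
        _ = (A.card : ℝ) := by simp
      have hG0 : 0 ≤ BPAD.G A c A.attach y' := h1 y'
      have hE : (0:ℝ) < Real.exp (-s) := Real.exp_pos _
      rw [hGy'] at hG0 ⊢
      nlinarith [mul_lt_mul_of_pos_left hm' hE, mul_le_mul_of_nonneg_left hTb ht.le]
    -- build the sequence
    choose yseq hyle hymax hybound using hseq
    have hGtend : Tendsto (fun k => BPAD.G A c A.attach (yseq k)) atTop (𝓝 0) := by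
      apply squeeze_zero (fun k => h1 (yseq k)) hybound
      have := tendsto_one_div_add_atTop_nhds_zero_nat (𝕜 := ℝ)
      simpa using this.mul_const (A.card : ℝ)
    obtain ⟨as, y2, has, hle2, has2, hG2⟩ := upgrade A c A.attach yseq hyle hymax hGtend
    -- run the face descent
    have h1' : ∀ y, 0 ≤ BPAD.G A c (face A (0 : Fin n → ℝ)) y := by
      rw [face_zero]; exact h1
    obtain ⟨W, Y, h1W, hYW⟩ := core A c hA (face A (0 : Fin n → ℝ)).card 0 le_rfl h1'
      ⟨as, y2, by rw [face_zero]; exact has,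
        by rw [face_zero]; exact hle2, has2, by rw [face_zero]; exact hG2⟩
    have hgrad := grad_zero A c (face A W) h1W Y hYW
    set u : Fin n → ℝ := fun i => Real.exp (Y i) with hu
    have hupos : ∀ i, 0 < u i := fun i => Real.exp_pos _
    have hprodu : ∀ a : ↥A, ∏ i, u i ^ a.1 i = Real.exp (BPAD.lin Y a.1) :=
      fun a => prod_exp_pow Y a.1
    -- evaluation of g
    have heval : (MvPolynomial.eval u)
        (∑ a ∈ face A W, MvPolynomial.C (c a) * ∏ i, MvPolynomial.X i ^ a.1 i) = 0 := by
      rw [map_sum]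
      have hterm : ∀ a ∈ face A W, (MvPolynomial.eval u)
          (MvPolynomial.C (c a) * ∏ i, MvPolynomial.X i ^ a.1 i)
          = c a * Real.exp (BPAD.lin Y a.1) := by
        intro a _
        rw [map_mul, MvPolynomial.eval_C, map_prod, ← hprodu a]
        congr 1
        exact Finset.prod_congr rfl fun i _ => by rw [map_pow, MvPolynomial.eval_X]
      rw [Finset.sum_congr rfl hterm]
      exact hYW
    -- derivatives of g
    have hpd : ∀ i : Fin n, (MvPolynomial.eval u) ((MvPolynomial.pderiv i)
        (∑ a ∈ face A W, MvPolynomial.C (c a) * ∏ j, MvPolynomial.X j ^ a.1 j)) = 0 := by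
      intro i
      rw [map_sum, map_sum]
      have hterm : ∀ a ∈ face A W, (MvPolynomial.eval u) ((MvPolynomial.pderiv i)
          (MvPolynomial.C (c a) * ∏ j, MvPolynomial.X j ^ a.1 j))
          = (c a * (a.1 i : ℝ)) * ∏ j, u j ^ ((Finsupp.equivFunOnFinite.symm a.1
              - Finsupp.single i 1 : Fin n →₀ ℕ) j) := by
        intro a _
        rw [poly_monomial (c a) a.1, MvPolynomial.pderiv_monomial, MvPolynomial.eval_monomial]
        rw [Finsupp.prod_fintype _ _ (fun j => pow_zero _)]
        congr 2
      rw [Finset.sum_congr rfl hterm]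
      have hkey : (∑ a ∈ face A W, (c a * (a.1 i : ℝ)) * ∏ j, u j ^
          ((Finsupp.equivFunOnFinite.symm a.1 - Finsupp.single i 1 : Fin n →₀ ℕ) j)) * u i
          = ∑ a ∈ face A W, c a * (a.1 i : ℝ) * Real.exp (BPAD.lin Y a.1) := by
        rw [Finset.sum_mul]
        refine Finset.sum_congr rfl (fun a _ => ?_)
        have := pow_shift u a.1 i
        calc (c a * (a.1 i : ℝ)) * (∏ j, u j ^ ((Finsupp.equivFunOnFinite.symm a.1
              - Finsupp.single i 1 : Fin n →₀ ℕ) j)) * u i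
            = c a * ((a.1 i : ℝ) * ((∏ j, u j ^ ((Finsupp.equivFunOnFinite.symm a.1
              - Finsupp.single i 1 : Fin n →₀ ℕ) j)) * u i)) := by ring
        _ = c a * ((a.1 i : ℝ) * ∏ j, u j ^ a.1 j) := by rw [this]
        _ = c a * (a.1 i : ℝ) * Real.exp (BPAD.lin Y a.1) := by rw [← hprodu a]; ring
      have hzero : (∑ a ∈ face A W, (c a * (a.1 i : ℝ)) * ∏ j, u j ^
          ((Finsupp.equivFunOnFinite.symm a.1 - Finsupp.single i 1 : Fin n →₀ ℕ) j)) * u i = 0 := by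
        rw [hkey]
        exact hgrad i
      rcases mul_eq_zero.mp hzero with h | h
      · exact h
      · exact absurd h (hupos i).ne'
    exact ⟨W, u, hupos, heval, hpd⟩
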